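/- arXiv:2407.19374 — 2 statements merged into one kernel-verified Lean document; each statement's English description precedes it below -/
import Mathlib

section
/- Let a be an integer, p a prime, k ≥ 2 an even integer, and define the sequence β by β₀ = 1, β₁ = a, and β_{m+1} = a·β_m − p^{k−1}·β_{m−1} for m ≥ 1. Then for all m ≥ 0, β_m = (1/2^m) · Σ_{j=0}^{⌊m/2⌋} Σ_{i=j}^{⌊m/2⌋} C(m+1, 2i+1)·C(i, j)·(−4)^j·a^{m−2j}·p^{(k−1)j}, where C(·,·) denotes binomial coefficients. -/
open Finset

theorem stmt0 (a : ℤ) (p k : ℕ) (hp : p.Prime) (hk : 2 ≤ k) (hke : Even k)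
    (β : ℕ → ℤ) (hβ0 : β 0 = 1) (hβ1 : β 1 = a)
    (hrec : ∀ m, 1 ≤ m → β (m + 1) = a * β m - (p : ℤ) ^ (k - 1) * β (m - 1)) :
    ∀ m, (2 : ℤ) ^ m * β m =
      ∑ j ∈ Finset.range (m / 2 + 1), ∑ i ∈ Finset.Icc j (m / 2),
        ((m + 1).choose (2 * i + 1) : ℤ) * (i.choose j : ℤ) * (-4) ^ j *
          a ^ (m - 2 * j) * (p : ℤ) ^ ((k - 1) * j) := by
  set q : ℤ := (p : ℤ) ^ (k - 1) with hq
  set D : ℤ := a ^ 2 - 4 * q with hD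
  set α : ℤ√D := ⟨a, 1⟩ with hα
  have him_sum : ∀ (s : Finset ℕ) (f : ℕ → ℤ√D),
      (∑ x ∈ s, f x).im = ∑ x ∈ s, (f x).im := fun s f =>
    map_sum ({ toFun := Zsqrtd.im, map_zero' := rfl,
               map_add' := fun _ _ => rfl } : ℤ√D →+ ℤ) f s
  -- α² = 2a α − 4q
  have hα2 : α ^ 2 = ((2 * a : ℤ) : ℤ√D) * α - ((4 * q : ℤ) : ℤ√D) := by
    refine Zsqrtd.ext ?_ ?_ <;>
      simp [hα, pow_two, Zsqrtd.re_mul, Zsqrtd.im_mul, Zsqrtd.re_sub, Zsqrtd.im_sub,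
        Zsqrtd.re_intCast, Zsqrtd.im_intCast, hD] <;> ring
  -- Part A : 2^n β n = im (α^(n+1))
  have hA : ∀ n, (2 : ℤ) ^ n * β n = (α ^ (n + 1)).im := by
    have H : ∀ n, (2 : ℤ) ^ n * β n = (α ^ (n + 1)).im ∧
        (2 : ℤ) ^ (n + 1) * β (n + 1) = (α ^ (n + 2)).im := by
      intro n
      induction n with
      | zero =>
        constructor
        · simp [hβ0, hα]
        · have : α ^ 2 = ((2 * a : ℤ) : ℤ√D) * α - ((4 * q : ℤ) : ℤ√D) := hα2
          rw [this]
          simp [hβ1, hα, Zsqrtd.im_mul, Zsqrtd.re_intCast, Zsqrtd.im_intCast,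
            Zsqrtd.im_sub]
          try ring
      | succ n ih =>
        refine ⟨ih.2, ?_⟩
        have hrw : α ^ (n + 3) = ((2 * a : ℤ) : ℤ√D) * α ^ (n + 2)
            - ((4 * q : ℤ) : ℤ√D) * α ^ (n + 1) := by
          have : α ^ (n + 3) = α ^ (n + 1) * α ^ 2 := by ring
          rw [this, hα2]; ring
        have him : (α ^ (n + 3)).im
            = 2 * a * (α ^ (n + 2)).im - 4 * q * (α ^ (n + 1)).im := by
          rw [hrw]
          simp [Zsqrtd.im_sub, Zsqrtd.im_mul, Zsqrtd.re_intCast, Zsqrtd.im_intCast]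
        have hb : β (n + 2) = a * β (n + 1) - q * β n := by
          have := hrec (n + 1) (by omega)
          simpa using this
        rw [show n + 1 + 1 = n + 2 from rfl, him, ← ih.1, ← ih.2, hb]
        ring
    exact fun n => (H n).1
  -- Part B : im (α^(N+1)) as a single sum
  have hsqpow : ∀ i : ℕ, (Zsqrtd.sqrtd : ℤ√D) ^ (2 * i) = ((D ^ i : ℤ) : ℤ√D) := by
    intro i
    rw [pow_mul, show (Zsqrtd.sqrtd : ℤ√D) ^ 2 = (D : ℤ√D) by
      rw [pow_two, Zsqrtd.dmuld], ← Int.cast_pow]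
  have hB : ∀ N, (α ^ (N + 1)).im =
      ∑ i ∈ range (N / 2 + 1), ((N + 1).choose (2 * i + 1) : ℤ) * a ^ (N - 2 * i) * D ^ i := by
    intro N
    have hαeq : α = Zsqrtd.sqrtd + ((a : ℤ) : ℤ√D) := by
      refine Zsqrtd.ext ?_ ?_ <;> simp [hα]
    rw [hαeq, add_pow, him_sum]
    rw [← Finset.sum_filter_add_sum_filter_not (range (N + 1 + 1)) (fun n => Odd n)]
    have hcast : ∀ e : ℕ, ((a : ℤ) : ℤ√D) ^ e = ((a ^ e : ℤ) : ℤ√D) := fun e =>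
      (Int.cast_pow a e).symm
    have hchoose : ∀ c : ℕ, ((c : ℕ) : ℤ√D) = ((c : ℤ) : ℤ√D) := by
      intro c; push_cast; ring
    have heven : ∑ n ∈ (range (N + 1 + 1)).filter (fun n => ¬ Odd n),
        ((Zsqrtd.sqrtd : ℤ√D) ^ n * ((a : ℤ) : ℤ√D) ^ (N + 1 - n) * ((N + 1).choose n : ℤ√D)).im
        = 0 := by
      refine Finset.sum_eq_zero ?_
      intro n hn
      simp only [mem_filter, Nat.not_odd_iff_even] at hn
      obtain ⟨i, hi⟩ := hn.2
      rw [show n = 2 * i by omega, hsqpow, hcast, hchoose, ← Int.cast_mul, ← Int.cast_mul,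
        Zsqrtd.im_intCast]
    rw [heven, add_zero]
    have hkey : ∀ (c1 c2 c3 : ℤ),
        ((c1 : ℤ√D) * Zsqrtd.sqrtd * (c2 : ℤ√D) * (c3 : ℤ√D)).im = c1 * c2 * c3 := by
      intro c1 c2 c3
      simp [Zsqrtd.im_mul, Zsqrtd.re_mul, Zsqrtd.re_intCast, Zsqrtd.im_intCast,
        Zsqrtd.re_sqrtd, Zsqrtd.im_sqrtd]
    refine Finset.sum_nbij' (fun n => (n - 1) / 2) (fun i => 2 * i + 1) ?_ ?_ ?_ ?_ ?_
    · intro n hn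
      simp only [mem_filter, mem_range] at hn
      obtain ⟨i, hi⟩ := hn.2
      simp only [mem_range]
      omega
    · intro i hi
      simp only [mem_range] at hi
      simp only [mem_filter, mem_range]
      exact ⟨by omega, ⟨i, by omega⟩⟩
    · intro n hn
      simp only [mem_filter, mem_range] at hn
      obtain ⟨i, hi⟩ := hn.2
      show 2 * ((n - 1) / 2) + 1 = n
      omega
    · intro i hi
      show (2 * i + 1 - 1) / 2 = i
      omega
    · intro n hn
      simp only [mem_filter, mem_range] at hn
      obtain ⟨i, hi⟩ := hn.2
      subst hi
      show _ = ((N + 1).choose (2 * ((2 * i + 1 - 1) / 2) + 1) : ℤ)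
        * a ^ (N - 2 * ((2 * i + 1 - 1) / 2)) * D ^ ((2 * i + 1 - 1) / 2)
      have hidx : (2 * i + 1 - 1) / 2 = i := by omega
      rw [hidx, pow_succ, hsqpow,
        show N + 1 - (2 * i + 1) = N - 2 * i by omega, hcast, hchoose, hkey]
      ring
  -- Part C and conclusion
  intro m
  rw [hA m, hB m]
  have hexp : ∀ i ∈ range (m / 2 + 1),
      ((m + 1).choose (2 * i + 1) : ℤ) * a ^ (m - 2 * i) * D ^ i
      = ∑ j ∈ range (i + 1), ((m + 1).choose (2 * i + 1) : ℤ) * (i.choose j : ℤ)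
          * (-4) ^ j * a ^ (m - 2 * j) * (p : ℤ) ^ ((k - 1) * j) := by
    intro i hi
    simp only [mem_range] at hi
    have hDi : D ^ i = ∑ j ∈ range (i + 1),
        (-(4 * q)) ^ j * (a ^ 2) ^ (i - j) * (i.choose j : ℤ) := by
      rw [show D = -(4 * q) + a ^ 2 by rw [hD]; ring, add_pow]
    rw [hDi, Finset.mul_sum]
    refine Finset.sum_congr rfl ?_
    intro j hj
    simp only [mem_range] at hj
    have h1 : a ^ (m - 2 * i) * (a ^ 2) ^ (i - j) = a ^ (m - 2 * j) := by
      rw [← pow_mul, ← pow_add]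
      congr 1
      omega
    have h2 : (-(4 * q)) ^ j = (-4) ^ j * (p : ℤ) ^ ((k - 1) * j) := by
      rw [show -(4 * q) = (-4) * q by ring, mul_pow, hq, ← pow_mul]
    rw [h2]
    calc ((m + 1).choose (2 * i + 1) : ℤ) * a ^ (m - 2 * i)
          * ((-4) ^ j * (p:ℤ) ^ ((k-1)*j) * (a ^ 2) ^ (i - j) * (i.choose j : ℤ))
        = ((m + 1).choose (2 * i + 1) : ℤ) * (i.choose j : ℤ) * (-4) ^ j
          * (a ^ (m - 2 * i) * (a ^ 2) ^ (i - j)) * (p:ℤ) ^ ((k-1)*j) := by ring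
      _ = _ := by rw [h1]
  rw [Finset.sum_congr rfl hexp]
  refine Finset.sum_comm' ?_
  intro i j
  simp only [mem_range, mem_Icc]
  omega
end

section
/- For all integers m ≥ 0 and all j with 0 ≤ j ≤ ⌊m/2⌋, the integer 2^{m−2j} divides Σ_{i=j}^{⌊m/2⌋} C(m+1, 2i+1)·C(i, j). -/
open Finset

private def Faux (M j N : ℕ) : ℕ := ∑ i ∈ Finset.range N, (M + 1).choose (2 * i + 1) * i.choose j

private lemma sum_range_even_odd {α : Type*} [AddCommMonoid α] (f : ℕ → α) (N : ℕ) :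
    ∑ k ∈ range (2 * N), f k = ∑ i ∈ range N, (f (2 * i) + f (2 * i + 1)) := by
  induction N with
  | zero => simp
  | succ n ih =>
    have h : 2 * (n + 1) = (2 * n + 1) + 1 := by ring
    rw [h, sum_range_succ, sum_range_succ, ih, sum_range_succ, add_assoc]

private lemma Fstab (M j : ℕ) {N N' : ℕ} (h : M / 2 < N) (h' : N ≤ N') :
    Faux M j N' = Faux M j N := by
  refine (Finset.sum_subset (by exact range_subset_range.2 h') ?_).symm
  intro x _ hx
  rw [mem_range, not_lt] at hx
  have : M + 1 < 2 * x + 1 := by omega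
  rw [Nat.choose_eq_zero_of_lt this, zero_mul]

private lemma Fbase (m N : ℕ) (h : m / 2 < N) : Faux m 0 N = 2 ^ m := by
  have hPascal : ∀ i : ℕ, (m + 1).choose (2 * i + 1) = m.choose (2 * i) + m.choose (2 * i + 1) :=
    fun i => Nat.choose_succ_succ m (2 * i)
  have : Faux m 0 N = ∑ k ∈ range (2 * N), m.choose k := by
    rw [sum_range_even_odd]
    unfold Faux
    refine Finset.sum_congr rfl fun i _ => ?_
    rw [hPascal i, Nat.choose_zero_right, mul_one]
  rw [this]
  have hsub : ∑ k ∈ range (2 * N), m.choose k = ∑ k ∈ range (m + 1), m.choose k := by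
    refine (Finset.sum_subset (range_subset_range.2 (by omega)) ?_).symm
    intro x _ hx
    rw [mem_range, not_lt] at hx
    exact Nat.choose_eq_zero_of_lt (by omega)
  rw [hsub, Nat.sum_range_choose]

private lemma Frec (m j K : ℕ) (hK : m + 1 ≤ K) :
    Faux (m + 2) (j + 1) (K + 1)
      = 2 * Faux (m + 1) (j + 1) (K + 1) + Faux m j (K + 1) := by
  have hA : (∑ i ∈ range (K + 1), (m + 2).choose (2 * i) * i.choose (j + 1))
      = Faux (m + 1) (j + 1) (K + 1) + Faux m j (K + 1) := by
    -- shift the index: i = 0 term vanishes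
    rw [Finset.sum_range_succ' (fun i => (m + 2).choose (2 * i) * i.choose (j + 1)) K]
    have h0 : (m + 2).choose (2 * 0) * Nat.choose 0 (j + 1) = 0 := by
      simp [Nat.choose_eq_zero_of_lt (Nat.succ_pos j)]
    rw [h0, add_zero]
    have hterm : ∀ i : ℕ, (m + 2).choose (2 * (i + 1)) * (i + 1).choose (j + 1)
        = (m + 1).choose (2 * i + 1) * (i + 1).choose (j + 1)
          + (m + 1).choose (2 * (i + 1)) * (i + 1).choose (j + 1) := by
      intro i
      have : (2 : ℕ) * (i + 1) = (2 * i + 1) + 1 := by ring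
      rw [this, Nat.choose_succ_succ (m + 1) (2 * i + 1), add_mul]
    rw [Finset.sum_congr rfl fun i _ => hterm i, Finset.sum_add_distrib]
    -- second piece: unshift back to even sum
    have hsecond : (∑ i ∈ range K, (m + 1).choose (2 * (i + 1)) * (i + 1).choose (j + 1))
        = ∑ i ∈ range (K + 1), (m + 1).choose (2 * i) * i.choose (j + 1) := by
      rw [Finset.sum_range_succ' (fun i => (m + 1).choose (2 * i) * i.choose (j + 1)) K]
      simp [Nat.choose_eq_zero_of_lt (Nat.succ_pos j)]
    -- first piece: extend range by one (top term vanishes)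
    have hfirst : (∑ i ∈ range K, (m + 1).choose (2 * i + 1) * (i + 1).choose (j + 1))
        = ∑ i ∈ range (K + 1), (m + 1).choose (2 * i + 1) * (i + 1).choose (j + 1) := by
      rw [Finset.sum_range_succ, Nat.choose_eq_zero_of_lt (by omega : m + 1 < 2 * K + 1),
        zero_mul, add_zero]
    rw [hsecond, hfirst]
    have hsplit : ∀ i : ℕ, (m + 1).choose (2 * i + 1) * (i + 1).choose (j + 1)
        = (m + 1).choose (2 * i + 1) * i.choose j
          + (m + 1).choose (2 * i + 1) * i.choose (j + 1) := by
      intro i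
      rw [Nat.choose_succ_succ i j, mul_add]
    rw [Finset.sum_congr rfl fun i _ => hsplit i, Finset.sum_add_distrib]
    have hF : (∑ i ∈ range (K + 1), (m + 1).choose (2 * i + 1) * i.choose (j + 1))
        + (∑ i ∈ range (K + 1), (m + 1).choose (2 * i) * i.choose (j + 1))
        = Faux (m + 1) (j + 1) (K + 1) := by
      unfold Faux
      rw [← Finset.sum_add_distrib]
      refine Finset.sum_congr rfl fun i _ => ?_
      rw [Nat.choose_succ_succ (m + 1) (2 * i), add_mul]
      ring
    have hA0 : (∑ i ∈ range (K + 1), (m + 1).choose (2 * i + 1) * i.choose j)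
        = Faux m j (K + 1) := rfl
    rw [add_assoc, hF, hA0, add_comm]
  unfold Faux
  have hsplit : ∀ i : ℕ, (m + 3).choose (2 * i + 1) * i.choose (j + 1)
      = (m + 2).choose (2 * i) * i.choose (j + 1)
        + (m + 2).choose (2 * i + 1) * i.choose (j + 1) := by
    intro i
    rw [Nat.choose_succ_succ (m + 2) (2 * i), add_mul]
  calc (∑ i ∈ range (K + 1), (m + 2 + 1).choose (2 * i + 1) * i.choose (j + 1))
      = (∑ i ∈ range (K + 1), (m + 2).choose (2 * i) * i.choose (j + 1))
        + ∑ i ∈ range (K + 1), (m + 2).choose (2 * i + 1) * i.choose (j + 1) := by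
        rw [← Finset.sum_add_distrib]
        exact Finset.sum_congr rfl fun i _ => hsplit i
    _ = _ := by
        rw [hA]
        unfold Faux
        ring

private lemma Fdvd : ∀ m j : ℕ, j ≤ m / 2 → 2 ^ (m - 2 * j) ∣ Faux m j (m + 1) := by
  intro m
  induction m using Nat.strong_induction_on with
  | _ m ih =>
    intro j hj
    match j with
    | 0 =>
      rw [Fbase m (m + 1) (by omega)]
      simp
    | j' + 1 =>
      match m with
      | m' + 2 =>
        have hm : m' + 2 + 1 = (m' + 2) + 1 := rfl
        rw [Frec m' j' (m' + 2) (by omega)]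
        have hj' : j' ≤ m' / 2 := by omega
        have hIH0 : 2 ^ (m' - 2 * j') ∣ Faux m' j' (m' + 1) := ih m' (by omega) j' hj'
        have hstab : Faux m' j' (m' + 2 + 1) = Faux m' j' (m' + 1) :=
          Fstab m' j' (by omega) (by omega)
        have hstab1 : Faux (m' + 1) (j' + 1) (m' + 2 + 1) = Faux (m' + 1) (j' + 1) (m' + 2) :=
          Fstab (m' + 1) (j' + 1) (by omega) (by omega)
        rw [hstab, hstab1]
        have hexp : m' + 2 - 2 * (j' + 1) = m' - 2 * j' := by omega
        rw [hexp]
        by_cases hc : m' ≤ 2 * j'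
        · have : m' - 2 * j' = 0 := by omega
          rw [this]
          exact one_dvd _
        · have h1 : j' + 1 ≤ (m' + 1) / 2 := by omega
          have hIH1 : 2 ^ (m' + 1 - 2 * (j' + 1)) ∣ Faux (m' + 1) (j' + 1) (m' + 2) :=
            ih (m' + 1) (by omega) (j' + 1) h1
          have hexp1 : m' - 2 * j' = (m' + 1 - 2 * (j' + 1)) + 1 := by omega
          refine dvd_add ?_ (hexp1 ▸ hIH0)
          rw [hexp1, pow_succ, mul_comm]
          exact mul_dvd_mul_left 2 hIH1

theorem stmt4 (m j : ℕ) (hj : j ≤ m / 2) :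
    2 ^ (m - 2 * j) ∣ ∑ i ∈ Finset.Icc j (m / 2), (m + 1).choose (2 * i + 1) * i.choose j := by
  have hT : (∑ i ∈ Finset.Icc j (m / 2), (m + 1).choose (2 * i + 1) * i.choose j)
      = Faux m j (m + 1) := by
    refine Finset.sum_subset ?_ ?_
    · intro x hx
      rw [Finset.mem_Icc] at hx
      rw [Finset.mem_range]
      omega
    · intro x hx hx'
      rw [Finset.mem_range] at hx
      rw [Finset.mem_Icc, not_and_or, not_le, not_le] at hx'
      rcases hx' with h | h
      · rw [Nat.choose_eq_zero_of_lt h, mul_zero]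
      · rw [Nat.choose_eq_zero_of_lt (by omega), zero_mul]
  rw [hT]
  exact Fdvd m j hj
end
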